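/- arXiv:2111.13447 — 5 statements merged into one kernel-verified Lean document; each statement's English description precedes it below -/
import Mathlib

section
/- Let U be a finite set, T a left-continuous t-norm with residual implicator I, and R : U × U → [0,1] a reflexive fuzzy relation. A fuzzy set A : U → [0,1] satisfies A(v) = max over u ∈ U of T(R(v,u), A(u)) for all v ∈ U (i.e., A is granularly representable) if and only if for all u, v ∈ U, R(v,u) ≤ I(A(u), A(v)), which in turn is equivalent to: for all u, v ∈ U, T(R(v,u), A(u)) ≤ A(v). -/
open Set

/-- A t-norm on the unit interval (modeled as a real binary operation whose
relevant properties hold on `[0,1]`). -/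
def IsTNorm (T : ℝ → ℝ → ℝ) : Prop :=
  (∀ x ∈ Icc (0:ℝ) 1, ∀ y ∈ Icc (0:ℝ) 1, T x y ∈ Icc (0:ℝ) 1) ∧
  (∀ x y : ℝ, T x y = T y x) ∧
  (∀ x y z : ℝ, T (T x y) z = T x (T y z)) ∧
  (∀ x ∈ Icc (0:ℝ) 1, ∀ y ∈ Icc (0:ℝ) 1, ∀ z ∈ Icc (0:ℝ) 1, y ≤ z → T x y ≤ T x z) ∧
  (∀ x ∈ Icc (0:ℝ) 1, T x 1 = x)

/-- Left continuity of a t-norm (in each argument; by commutativity it suffices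
to require it in the second argument). -/
def LeftContinuousTNorm (T : ℝ → ℝ → ℝ) : Prop :=
  ∀ x ∈ Icc (0:ℝ) 1, ∀ y ∈ Icc (0:ℝ) 1, ContinuousWithinAt (fun z => T x z) (Iic y) y

/-- The residual implicator `I(x,y) = sup {λ ∈ [0,1] : T(x,λ) ≤ y}`. -/
noncomputable def resImp (T : ℝ → ℝ → ℝ) (x y : ℝ) : ℝ :=
  sSup {l : ℝ | l ∈ Icc (0:ℝ) 1 ∧ T x l ≤ y}

lemma zero_mem_resSet (T : ℝ → ℝ → ℝ) (hT : IsTNorm T) {x y : ℝ}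
    (hx : x ∈ Icc (0:ℝ) 1) (hy : y ∈ Icc (0:ℝ) 1) :
    (0:ℝ) ∈ {l : ℝ | l ∈ Icc (0:ℝ) 1 ∧ T x l ≤ y} := by
  obtain ⟨hrange, hcomm, -, hmono, hone⟩ := hT
  have h01 : (0:ℝ) ∈ Icc (0:ℝ) 1 := ⟨le_refl 0, zero_le_one⟩
  have h11 : (1:ℝ) ∈ Icc (0:ℝ) 1 := ⟨zero_le_one, le_refl 1⟩
  refine ⟨h01, ?_⟩
  have h1 : T 0 x ≤ T 0 1 := hmono 0 h01 x hx 1 h11 hx.2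
  have h2 : T 0 1 = 0 := hone 0 h01
  calc T x 0 = T 0 x := hcomm x 0
    _ ≤ 0 := by rw [h2] at h1; exact h1
    _ ≤ y := hy.1

lemma resImp_mem (T : ℝ → ℝ → ℝ) (hT : IsTNorm T) {x y : ℝ}
    (hx : x ∈ Icc (0:ℝ) 1) (hy : y ∈ Icc (0:ℝ) 1) :
    resImp T x y ∈ Icc (0:ℝ) 1 := by
  have h0 := zero_mem_resSet T hT hx hy
  have hbdd : BddAbove {l : ℝ | l ∈ Icc (0:ℝ) 1 ∧ T x l ≤ y} :=
    ⟨1, fun l hl => hl.1.2⟩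
  exact ⟨le_csSup hbdd h0, csSup_le ⟨0, h0⟩ (fun l hl => hl.1.2)⟩

lemma T_resImp_le (T : ℝ → ℝ → ℝ) (hT : IsTNorm T) (hLC : LeftContinuousTNorm T)
    {x y : ℝ} (hx : x ∈ Icc (0:ℝ) 1) (hy : y ∈ Icc (0:ℝ) 1) :
    T x (resImp T x y) ≤ y := by
  set S := {l : ℝ | l ∈ Icc (0:ℝ) 1 ∧ T x l ≤ y} with hS
  have h0 := zero_mem_resSet T hT hx hy
  have hbdd : BddAbove S := ⟨1, fun l hl => hl.1.2⟩
  have hne : S.Nonempty := ⟨0, h0⟩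
  have hs : resImp T x y ∈ Icc (0:ℝ) 1 := resImp_mem T hT hx hy
  have hcl : sSup S ∈ closure S := csSup_mem_closure hne hbdd
  have hcont : ContinuousWithinAt (fun z => T x z) (Iic (sSup S)) (sSup S) :=
    hLC x hx (sSup S) hs
  have hsub : S ⊆ Iic (sSup S) := fun l hl => le_csSup hbdd hl
  have hmem : T x (sSup S) ∈ closure ((fun z => T x z) '' S) :=
    (hcont.mono hsub).mem_closure_image hcl
  have himg : (fun z => T x z) '' S ⊆ Iic y := by
    rintro _ ⟨l, hl, rfl⟩; exact hl.2
  have hclsub : closure ((fun z => T x z) '' S) ⊆ Iic y := by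
    rw [← isClosed_Iic.closure_eq]; exact closure_mono himg
  exact hclsub hmem

lemma residuation (T : ℝ → ℝ → ℝ) (hT : IsTNorm T) (hLC : LeftContinuousTNorm T)
    {x y l : ℝ} (hx : x ∈ Icc (0:ℝ) 1) (hy : y ∈ Icc (0:ℝ) 1) (hl : l ∈ Icc (0:ℝ) 1) :
    T x l ≤ y ↔ l ≤ resImp T x y := by
  constructor
  · intro h
    exact le_csSup ⟨1, fun m hm => hm.1.2⟩ ⟨hl, h⟩
  · intro h
    have hs := resImp_mem T hT hx hy
    calc T x l ≤ T x (resImp T x y) := hT.2.2.2.1 x hx l hl _ hs h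
      _ ≤ y := T_resImp_le T hT hLC hx hy

theorem granular_representability_characterization
    (U : Type*) [Fintype U] [Nonempty U]
    (T : ℝ → ℝ → ℝ) (hT : IsTNorm T) (hLC : LeftContinuousTNorm T)
    (R : U → U → ℝ) (hR : ∀ u v, R u v ∈ Icc (0:ℝ) 1)
    (hRrefl : ∀ u, R u u = 1)
    (A : U → ℝ) (hA : ∀ u, A u ∈ Icc (0:ℝ) 1) :
    ((∀ v, A v = ⨆ u, T (R v u) (A u)) ↔
      (∀ u v, R v u ≤ resImp T (A u) (A v))) ∧
    ((∀ u v, R v u ≤ resImp T (A u) (A v)) ↔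
      (∀ u v, T (R v u) (A u) ≤ A v)) := by
  have hcomm := hT.2.1
  have iff23 : (∀ u v, R v u ≤ resImp T (A u) (A v)) ↔
      (∀ u v, T (R v u) (A u) ≤ A v) := by
    constructor <;> intro h u v
    · rw [hcomm]
      exact (residuation T hT hLC (hA u) (hA v) (hR v u)).mpr (h u v)
    · refine (residuation T hT hLC (hA u) (hA v) (hR v u)).mp ?_
      rw [hcomm]; exact h u v
  have hbdd : ∀ v, BddAbove (Set.range fun u => T (R v u) (A u)) :=
    fun v => (Set.finite_range _).bddAbove
  have iff13 : (∀ v, A v = ⨆ u, T (R v u) (A u)) ↔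
      (∀ u v, T (R v u) (A u) ≤ A v) := by
    constructor
    · intro h u v
      rw [h v]
      exact le_ciSup (hbdd v) u
    · intro h v
      refine le_antisymm ?_ (ciSup_le (fun u => h u v))
      have hv : A v = T (R v v) (A v) := by
        rw [hRrefl v, hcomm, hT.2.2.2.2 (A v) (hA v)]
      calc A v = T (R v v) (A v) := hv
        _ ≤ ⨆ u, T (R v u) (A u) := le_ciSup (hbdd v) v
  exact ⟨iff13.trans iff23.symm, iff23⟩
end

section
/- Let U be a finite set, T a left-continuous t-norm, R : U × U → [0,1] a reflexive and T-transitive fuzzy relation, and A : U → [0,1] a fuzzy set. Define the upper approximation Apr(A)(u) = max over v ∈ U of T(R(u,v), A(v)). Then Apr(A) is the smallest granularly representable fuzzy set containing A; that is: (1) A(u) ≤ Apr(A)(u) for all u; (2) T(R(v,u), Apr(A)(u)) ≤ Apr(A)(v) for all u, v; and (3) any granularly representable fuzzy set B with A ≤ B pointwise satisfies Apr(A) ≤ B pointwise. -/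
open Set

theorem upper_approximation_smallest_granular
    (U : Type*) [Fintype U] [Nonempty U]
    (T : ℝ → ℝ → ℝ) (hT : IsTNorm T) (hLC : LeftContinuousTNorm T)
    (R : U → U → ℝ) (hR : ∀ u v, R u v ∈ Icc (0:ℝ) 1)
    (hRrefl : ∀ u, R u u = 1)
    (hRtrans : ∀ u v w, T (R u v) (R v w) ≤ R u w)
    (A : U → ℝ) (hA : ∀ u, A u ∈ Icc (0:ℝ) 1)
    (Apr : U → ℝ) (hApr : ∀ u, Apr u = ⨆ v, T (R u v) (A v)) :
    (∀ u, A u ≤ Apr u) ∧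
    (∀ u v, T (R v u) (Apr u) ≤ Apr v) ∧
    (∀ B : U → ℝ, (∀ u, B u ∈ Icc (0:ℝ) 1) →
      (∀ u v, T (R v u) (B u) ≤ B v) → (∀ u, A u ≤ B u) → ∀ u, Apr u ≤ B u) := by
  obtain ⟨hTmem, hTcomm, hTassoc, hTmono, hTone⟩ := hT
  have hbdd : ∀ u, BddAbove (Set.range fun v => T (R u v) (A v)) := fun u =>
    (Set.finite_range _).bddAbove
  have hterm : ∀ u v, T (R u v) (A v) ∈ Icc (0:ℝ) 1 := fun u v =>
    hTmem _ (hR u v) _ (hA v)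
  have h1 : ∀ u, A u ≤ Apr u := by
    intro u
    rw [hApr u]
    have : T (R u u) (A u) = A u := by
      rw [hRrefl u, hTcomm]; exact hTone _ (hA u)
    calc A u = T (R u u) (A u) := this.symm
      _ ≤ _ := le_ciSup (hbdd u) u
  refine ⟨h1, ?_, ?_⟩
  · intro u v
    -- Apr u is attained at some w0
    obtain ⟨w0, hw0⟩ := Finite.exists_max (fun w => T (R u w) (A w))
    have hAprU : Apr u = T (R u w0) (A w0) := by
      rw [hApr u]
      exact le_antisymm (ciSup_le hw0) (le_ciSup (hbdd u) w0)
    rw [hAprU, hApr v]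
    have key : T (R v u) (T (R u w0) (A w0)) ≤ T (R v w0) (A w0) := by
      rw [← hTassoc]
      rw [hTcomm (T (R v u) (R u w0)) (A w0), hTcomm (R v w0) (A w0)]
      exact hTmono _ (hA w0) _ (hTmem _ (hR v u) _ (hR u w0)) _ (hR v w0)
        (hRtrans v u w0)
    exact key.trans (le_ciSup (hbdd v) w0)
  · intro B hB hBgr hAB u
    rw [hApr u]
    refine ciSup_le fun v => ?_
    have : T (R u v) (A v) ≤ T (R u v) (B v) :=
      hTmono _ (hR u v) _ (hA v) _ (hB v) (hAB v)
    exact this.trans (hBgr v u)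
end

section
/- Let U be a finite set, T a left-continuous t-norm, I its residual implicator, N(x) = I(x,0) the induced negator, R a fuzzy relation on U, and A : U → [0,1] a fuzzy set that is granularly representable with respect to T and R. Then the fuzzy complement coA, defined by coA(u) = N(A(u)), is granularly representable with respect to T and the inverse relation R⁻¹, where R⁻¹(u,v) = R(v,u). -/
open Set

theorem complement_granular_representable
    (U : Type*) [Fintype U]
    (T : ℝ → ℝ → ℝ) (hT : IsTNorm T) (hLC : LeftContinuousTNorm T)
    (R : U → U → ℝ) (hR : ∀ u v, R u v ∈ Icc (0:ℝ) 1)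
    (A : U → ℝ) (hA : ∀ u, A u ∈ Icc (0:ℝ) 1)
    (hGran : ∀ u v, T (R u v) (A v) ≤ A u) :
    -- `coA` is granularly representable w.r.t. the inverse relation `R⁻¹(u,v) = R(v,u)`:
    ∀ u v : U, T (R v u) (resImp T (A v) 0) ≤ resImp T (A u) 0 := by
  obtain ⟨hcl, hcomm, hassoc, hmono, hone⟩ := hT
  -- T x 0 = 0 for x ∈ [0,1]
  have hzero : ∀ x ∈ Icc (0:ℝ) 1, T x 0 ≤ 0 := by
    intro x hx
    have h1 : T 0 x ≤ T 0 1 :=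
      hmono 0 ⟨le_refl 0, zero_le_one⟩ x hx 1 ⟨zero_le_one, le_refl 1⟩ hx.2
    have h2 : T 0 1 = 0 := hone 0 ⟨le_refl 0, zero_le_one⟩
    calc T x 0 = T 0 x := hcomm x 0
    _ ≤ 0 := by rw [h2] at h1; exact h1
  have key : ∀ x ∈ Icc (0:ℝ) 1,
      resImp T x 0 ∈ Icc (0:ℝ) 1 ∧ T x (resImp T x 0) ≤ 0 := by
    intro x hx
    set S : Set ℝ := {l : ℝ | l ∈ Icc (0:ℝ) 1 ∧ T x l ≤ 0} with hS
    have h0S : (0:ℝ) ∈ S := ⟨⟨le_refl 0, zero_le_one⟩, hzero x hx⟩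
    have hbdd : BddAbove S := ⟨1, fun l hl => hl.1.2⟩
    have hne : S.Nonempty := ⟨0, h0S⟩
    have hsle : sSup S ≤ 1 := csSup_le hne fun l hl => hl.1.2
    have hsge : (0:ℝ) ≤ sSup S := le_csSup hbdd h0S
    have hsIcc : sSup S ∈ Icc (0:ℝ) 1 := ⟨hsge, hsle⟩
    refine ⟨hsIcc, ?_⟩
    have hsub : S ⊆ Iic (sSup S) := fun l hl => le_csSup hbdd hl
    have hcw : ContinuousWithinAt (fun z => T x z) S (sSup S) :=
      (hLC x hx (sSup S) hsIcc).mono hsub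
    have hclmem : sSup S ∈ closure S := csSup_mem_closure hne hbdd
    haveI : (nhdsWithin (sSup S) S).NeBot := mem_closure_iff_nhdsWithin_neBot.mp hclmem
    exact le_of_tendsto hcw
      (Filter.eventually_of_mem self_mem_nhdsWithin fun l hl => hl.2)
  intro u v
  obtain ⟨hNIcc, hNle⟩ := key (A v) (hA v)
  have hTmem : T (R v u) (resImp T (A v) 0) ∈ Icc (0:ℝ) 1 :=
    hcl (R v u) (hR v u) _ hNIcc
  have hTAu : T (A u) (T (R v u) (resImp T (A v) 0)) ≤ 0 := by
    have h1 : T (A u) (T (R v u) (resImp T (A v) 0))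
        = T (T (R v u) (A u)) (resImp T (A v) 0) := by
      rw [← hassoc, hcomm (A u) (R v u)]
    have h2 : T (T (R v u) (A u)) (resImp T (A v) 0)
        ≤ T (A v) (resImp T (A v) 0) := by
      rw [hcomm (T (R v u) (A u)) _, hcomm (A v) _]
      exact hmono _ hNIcc _ (hcl _ (hR v u) _ (hA u)) _ (hA v) (hGran v u)
    rw [h1]; exact le_trans h2 hNle
  have hmem : T (R v u) (resImp T (A v) 0) ∈
      {l : ℝ | l ∈ Icc (0:ℝ) 1 ∧ T (A u) l ≤ 0} := ⟨hTmem, hTAu⟩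
  exact le_csSup ⟨1, fun l hl => hl.1.2⟩ hmem
end

section
/- Let T be a t-norm whose partial mappings y ↦ T(c,y) are convex functions for every fixed c ∈ [0,1] (a D-convex t-norm). Let U be a finite set, R : U × U → [0,1] a fuzzy relation, and for each p ∈ [0,1] let A_p : U → [0,1] be a fuzzy set, such that p ↦ A_p(u) is integrable for each u and T(R(v,u), A_p(u)) ≤ A_p(v) for all u, v ∈ U and all p ∈ [0,1]. Define E(u) = ∫₀¹ A_p(u) dp. Then E is granularly representable: T(R(v,u), E(u)) ≤ E(v) for all u, v ∈ U. -/
open Set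

theorem expectation_granularly_representable
    (U : Type*) [Fintype U]
    (T : ℝ → ℝ → ℝ) (hT : IsTNorm T)
    (hconv : ∀ c ∈ Icc (0:ℝ) 1, ConvexOn ℝ (Icc (0:ℝ) 1) (fun y => T c y))
    (R : U → U → ℝ) (hR : ∀ u v, R u v ∈ Icc (0:ℝ) 1)
    (A : ℝ → U → ℝ) (hA : ∀ p ∈ Icc (0:ℝ) 1, ∀ u, A p u ∈ Icc (0:ℝ) 1)
    (hInt : ∀ u, IntervalIntegrable (fun p => A p u) MeasureTheory.volume 0 1)
    (hGran : ∀ p ∈ Icc (0:ℝ) 1, ∀ u v : U, T (R v u) (A p u) ≤ A p v)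
    (E : U → ℝ) (hE : ∀ u, E u = ∫ p in (0:ℝ)..1, A p u) :
    ∀ u v : U, T (R v u) (E u) ≤ E v := by
  intro u v
  set c := R v u with hc_def
  have hc : c ∈ Icc (0:ℝ) 1 := hR v u
  obtain ⟨hT01, hTcomm, hTassoc, hTmono, hTone⟩ := hT
  have hmul : ∀ y ∈ Icc (0:ℝ) 1, ∀ z ∈ Icc (0:ℝ) 1, y ≤ z → T c y ≤ T c z :=
    fun y hy z hz => hTmono c hc y hy z hz
  have hEu_mem : E u ∈ Icc (0:ℝ) 1 := by
    rw [hE u]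
    constructor
    · exact intervalIntegral.integral_nonneg (by norm_num) (fun p hp => (hA p hp u).1)
    · calc (∫ p in (0:ℝ)..1, A p u) ≤ ∫ p in (0:ℝ)..1, (1:ℝ) := by
            apply intervalIntegral.integral_mono_on (by norm_num) (hInt u)
              intervalIntegrable_const
            exact fun p hp => (hA p hp u).2
        _ = 1 := by simp
  have hEv : E v = ∫ p in Set.Ioc (0:ℝ) 1, A p v := by
    rw [hE v, intervalIntegral.integral_of_le (by norm_num)]
  rcases eq_or_lt_of_le hEu_mem.2 with h1 | hlt
  · -- Case E u = 1 : A p u = 1 a.e. on (0,1]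
    have hIntOn : MeasureTheory.IntegrableOn (fun p => A p u) (Set.Ioc (0:ℝ) 1) :=
      (hInt u).1
    have hintsub : MeasureTheory.IntegrableOn (fun p => 1 - A p u) (Set.Ioc (0:ℝ) 1) := by
      exact (MeasureTheory.integrableOn_const
        (by simp [Real.volume_Ioc])).sub hIntOn
    have hnonneg : 0 ≤ᵐ[MeasureTheory.volume.restrict (Set.Ioc (0:ℝ) 1)]
        fun p => 1 - A p u := by
      filter_upwards [MeasureTheory.ae_restrict_mem measurableSet_Ioc] with p hp
      have := (hA p (Ioc_subset_Icc_self hp) u).2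
      show (0:ℝ) ≤ 1 - A p u
      linarith
    have hzero : ∫ p in Set.Ioc (0:ℝ) 1, (1 - A p u) = 0 := by
      rw [MeasureTheory.integral_sub (MeasureTheory.integrableOn_const
        (C := (1:ℝ)) (s := Set.Ioc (0:ℝ) 1) (μ := MeasureTheory.volume) (by simp [Real.volume_Ioc])) hIntOn]
      have h2 : ∫ p in Set.Ioc (0:ℝ) 1, A p u = E u := by
        rw [hE u, intervalIntegral.integral_of_le (by norm_num)]
      rw [h2]
      simp [Real.volume_Ioc, h1]
    have hae : (fun p => 1 - A p u) =ᵐ[MeasureTheory.volume.restrict (Set.Ioc (0:ℝ) 1)]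
        (0 : ℝ → ℝ) :=
      (MeasureTheory.integral_eq_zero_iff_of_nonneg_ae hnonneg hintsub).1 hzero
    have hle : ∀ᵐ p ∂(MeasureTheory.volume.restrict (Set.Ioc (0:ℝ) 1)), c ≤ A p v := by
      filter_upwards [hae, MeasureTheory.ae_restrict_mem measurableSet_Ioc] with p hp hpmem
      have hA1 : A p u = 1 := by
        have h3 : (1:ℝ) - A p u = 0 := by simpa using hp
        linarith
      have := hGran p (Ioc_subset_Icc_self hpmem) u v
      rw [hA1, hTone (R v u) (hR v u)] at this
      exact this
    have hcle : c ≤ E v := by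
      rw [hEv]
      calc c = ∫ _ in Set.Ioc (0:ℝ) 1, c := by simp [Real.volume_Ioc]
        _ ≤ ∫ p in Set.Ioc (0:ℝ) 1, A p v := by
            apply MeasureTheory.integral_mono_ae
              (MeasureTheory.integrableOn_const (C := c) (s := Set.Ioc (0:ℝ) 1) (μ := MeasureTheory.volume) (by simp [Real.volume_Ioc]))
              (hInt v).1 hle
    rw [h1, hTone c hc]
    exact hcle
  · -- Case E u < 1 : supporting line at x₀ := E u
    set x₀ := E u with hx₀
    have hx₀mem : x₀ ∈ Icc (0:ℝ) 1 := hEu_mem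
    set g : ℝ → ℝ := fun y => T c y with hg
    have hgmono : ∀ y ∈ Icc (0:ℝ) 1, ∀ z ∈ Icc (0:ℝ) 1, y ≤ z → g y ≤ g z := hmul
    set S := (fun y => (g y - g x₀) / (y - x₀)) '' Set.Ioc x₀ 1 with hS
    have hSne : S.Nonempty := ⟨_, ⟨1, ⟨hlt, le_refl 1⟩, rfl⟩⟩
    have hSbd : BddBelow S := by
      refine ⟨0, ?_⟩
      rintro s ⟨y, hy, rfl⟩
      have hyIcc : y ∈ Icc (0:ℝ) 1 := ⟨le_of_lt (lt_of_le_of_lt hx₀mem.1 hy.1), hy.2⟩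
      have hge := hgmono x₀ hx₀mem y hyIcc (le_of_lt hy.1)
      have hpos : 0 < y - x₀ := by linarith [hy.1]
      exact div_nonneg (by linarith) (le_of_lt hpos)
    set m := sInf S with hm
    have hsupport : ∀ y ∈ Icc (0:ℝ) 1, g x₀ + m * (y - x₀) ≤ g y := by
      intro y hy
      rcases lt_trichotomy y x₀ with h | h | h
      · have hslope : (g x₀ - g y) / (x₀ - y) ≤ m := by
          apply le_csInf hSne
          rintro s ⟨z, hz, rfl⟩
          have hzIcc : z ∈ Icc (0:ℝ) 1 := ⟨le_of_lt (lt_of_le_of_lt hx₀mem.1 hz.1), hz.2⟩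
          exact (hconv c hc).slope_mono_adjacent hy hzIcc h hz.1
        have hpos : 0 < x₀ - y := by linarith
        have := (div_le_iff₀ hpos).1 hslope
        nlinarith
      · rw [h]; simp
      · have hmle : m ≤ (g y - g x₀) / (y - x₀) := csInf_le hSbd ⟨y, ⟨h, hy.2⟩, rfl⟩
        have hpos : 0 < y - x₀ := by linarith
        have := (le_div_iff₀ hpos).1 hmle
        linarith
    have hpt : ∀ p ∈ Icc (0:ℝ) 1, g x₀ + m * (A p u - x₀) ≤ A p v :=
      fun p hp => (hsupport (A p u) (hA p hp u)).trans (hGran p hp u v)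
    have hint1 : IntervalIntegrable (fun p => g x₀ + m * (A p u - x₀))
        MeasureTheory.volume 0 1 := by
      apply IntervalIntegrable.add intervalIntegrable_const
      exact ((hInt u).sub intervalIntegrable_const).const_mul m
    have hmono_int : (∫ p in (0:ℝ)..1, (g x₀ + m * (A p u - x₀))) ≤ ∫ p in (0:ℝ)..1, A p v :=
      intervalIntegral.integral_mono_on (by norm_num) hint1 (hInt v) (fun p hp => hpt p hp)
    have hLHS : (∫ p in (0:ℝ)..1, (g x₀ + m * (A p u - x₀))) = g x₀ := by
      rw [intervalIntegral.integral_add intervalIntegrable_const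
        (((hInt u).sub intervalIntegrable_const).const_mul m),
        intervalIntegral.integral_const_mul,
        intervalIntegral.integral_sub (hInt u) intervalIntegrable_const]
      rw [← hE u]
      simp [hx₀]
    have : g x₀ ≤ ∫ p in (0:ℝ)..1, A p v := hLHS ▸ hmono_int
    rw [← hE v] at this
    exact this
end

section
/- Let T be a left-continuous t-norm with residual implicator I, and suppose the induced negator N(x) = I(x,0) is involutive. Let U be a finite set, R a fuzzy relation on U, and A : U → [0,1]. Then A is granularly representable w.r.t. T and R if and only if coA, defined by coA(u) = N(A(u)), is granularly representable w.r.t. T and R⁻¹, where R⁻¹(u,v) = R(v,u). -/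
open Set

section aux
variable {T : ℝ → ℝ → ℝ}

lemma Tx0 (hT : IsTNorm T) {x : ℝ} (hx : x ∈ Icc (0:ℝ) 1) : T x 0 = 0 := by
  obtain ⟨hB, hC, hAs, hM, hN⟩ := hT
  have h01 : (0:ℝ) ∈ Icc (0:ℝ) 1 := ⟨le_refl 0, zero_le_one⟩
  have h11 : (1:ℝ) ∈ Icc (0:ℝ) 1 := ⟨zero_le_one, le_refl 1⟩
  have h1 : T x 0 = T 0 x := hC x 0
  have h2 : T 0 x ≤ T 0 1 := hM 0 h01 x hx 1 h11 hx.2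
  have h3 : T 0 1 = 0 := hN 0 h01
  have h4 : 0 ≤ T 0 x := (hB 0 h01 x hx).1
  linarith

lemma zero_mem_S (hT : IsTNorm T) {x : ℝ} (hx : x ∈ Icc (0:ℝ) 1) :
    (0:ℝ) ∈ {l : ℝ | l ∈ Icc (0:ℝ) 1 ∧ T x l ≤ 0} :=
  ⟨⟨le_refl 0, zero_le_one⟩, le_of_eq (Tx0 hT hx)⟩

lemma bddS {x : ℝ} : BddAbove {l : ℝ | l ∈ Icc (0:ℝ) 1 ∧ T x l ≤ 0} :=
  ⟨1, fun l hl => hl.1.2⟩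

lemma N_mem (hT : IsTNorm T) {x : ℝ} (hx : x ∈ Icc (0:ℝ) 1) :
    resImp T x 0 ∈ Icc (0:ℝ) 1 := by
  constructor
  · exact le_csSup bddS (zero_mem_S hT hx)
  · exact csSup_le ⟨0, zero_mem_S hT hx⟩ (fun l hl => hl.1.2)

lemma res_le (hT : IsTNorm T) (hLC : LeftContinuousTNorm T) {x : ℝ}
    (hx : x ∈ Icc (0:ℝ) 1) : T x (resImp T x 0) ≤ 0 := by
  set S := {l : ℝ | l ∈ Icc (0:ℝ) 1 ∧ T x l ≤ 0} with hS
  have hne : S.Nonempty := ⟨0, zero_mem_S hT hx⟩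
  have hbdd : BddAbove S := bddS
  have hsmem : sSup S ∈ Icc (0:ℝ) 1 := N_mem hT hx
  have hcl : sSup S ∈ closure S := csSup_mem_closure hne hbdd
  have hsub : S ⊆ Iic (sSup S) := fun l hl => le_csSup hbdd hl
  have hcont : ContinuousWithinAt (fun z => T x z) S (sSup S) :=
    (hLC x hx (sSup S) hsmem).mono hsub
  have hne2 : (nhdsWithin (sSup S) S).NeBot := mem_closure_iff_nhdsWithin_neBot.mp hcl
  refine le_of_tendsto hcont ?_
  exact Filter.eventually_of_mem self_mem_nhdsWithin (fun l hl => hl.2)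

lemma cp (hT : IsTNorm T) (hLC : LeftContinuousTNorm T) {a b c : ℝ}
    (ha : a ∈ Icc (0:ℝ) 1) (hb : b ∈ Icc (0:ℝ) 1) (hc : c ∈ Icc (0:ℝ) 1)
    (h : T a b ≤ c) : T a (resImp T c 0) ≤ resImp T b 0 := by
  obtain ⟨hB, hC, hAs, hM, hN1⟩ := hT
  have hNc : resImp T c 0 ∈ Icc (0:ℝ) 1 := N_mem ⟨hB, hC, hAs, hM, hN1⟩ hc
  have hTab : T a b ∈ Icc (0:ℝ) 1 := hB a ha b hb
  have haNc : T a (resImp T c 0) ∈ Icc (0:ℝ) 1 := hB a ha _ hNc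
  -- T (T a (N c)) b = T (T a b) (N c) ≤ T c (N c) ≤ 0
  have key : T b (T a (resImp T c 0)) ≤ 0 := by
    have e1 : T b (T a (resImp T c 0)) = T (resImp T c 0) (T a b) := by
      rw [← hAs, hC (T b a), hC b a]
    have e2 : T (resImp T c 0) (T a b) ≤ T (resImp T c 0) c :=
      hM _ hNc _ hTab c hc h
    have e3 : T (resImp T c 0) c = T c (resImp T c 0) := hC _ _
    have e4 : T c (resImp T c 0) ≤ 0 := res_le ⟨hB, hC, hAs, hM, hN1⟩ hLC hc
    linarith
  exact le_csSup bddS ⟨haNc, key⟩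

end aux

theorem granular_complement_iff
    (U : Type*) [Fintype U]
    (T : ℝ → ℝ → ℝ) (hT : IsTNorm T) (hLC : LeftContinuousTNorm T)
    (hNinv : ∀ x ∈ Icc (0:ℝ) 1, resImp T (resImp T x 0) 0 = x)
    (R : U → U → ℝ) (hR : ∀ u v, R u v ∈ Icc (0:ℝ) 1)
    (A : U → ℝ) (hA : ∀ u, A u ∈ Icc (0:ℝ) 1) :
    (∀ u v : U, T (R u v) (A v) ≤ A u) ↔
      (∀ u v : U, T (R v u) (resImp T (A v) 0) ≤ resImp T (A u) 0) := by
  constructor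
  · intro h u v
    exact cp hT hLC (hR v u) (hA u) (hA v) (h v u)
  · intro h u v
    have := cp hT hLC (hR u v) (N_mem hT (hA u)) (N_mem hT (hA v)) (h v u)
    rwa [hNinv (A v) (hA v), hNinv (A u) (hA u)] at this
end
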